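/- Let ζ be a charge curve with inverse ζ⁻¹ on [0,1], and let Δζ(y,t) = ζ(ζ⁻¹(y)+t) − y. Given a finite list of positive time steps θ₁,…,θ_k and an initial state y₀ ∈ [0,1], define iteratively y_i = y_{i−1} + Δζ(y_{i−1}, θ_i). Then the final state satisfies y_k = Δζ(y₀, θ₁ + ⋯ + θ_k) + y₀. That is, iterated application of the charge increment function over successive time steps equals a single application over the total duration. -/

import Mathlib

/-- Iterated application of the charge increment function
Δζ(y,t) = ζ(ζ⁻¹(y)+t) − y over successive positive time steps θ₁,…,θ_k equals a single
application over the total duration. -/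
theorem charge_increment_iteration
    (ζ ζinv : ℝ → ℝ) (T : ℝ) (hT : 0 < T)
    (hmono : StrictMonoOn ζ (Set.Icc 0 T))
    (h0 : ζ 0 = 0)
    (h1 : ∀ t, T ≤ t → ζ t = 1)
    (hinv : ∀ y ∈ Set.Icc (0:ℝ) 1, ζinv y ∈ Set.Icc 0 T ∧ ζ (ζinv y) = y)
    (hinvζ : ∀ s ∈ Set.Icc (0:ℝ) T, ζinv (ζ s) = s)
    (k : ℕ) (θ : ℕ → ℝ) (hθ : ∀ i < k, 0 < θ i)
    (y : ℕ → ℝ) (hy0 : y 0 ∈ Set.Icc (0:ℝ) 1)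
    (hstep : ∀ i < k, y (i + 1) = y i + (ζ (ζinv (y i) + θ i) - y i)) :
    y k = (ζ (ζinv (y 0) + ∑ i ∈ Finset.range k, θ i) - y 0) + y 0 := by
  have hζT : ζ T = 1 := h1 T le_rfl
  have hinvT : ζinv 1 = T := by
    have := hinvζ T ⟨le_of_lt hT, le_rfl⟩
    rwa [hζT] at this
  obtain ⟨hz0, hz0ζ⟩ := hinv _ hy0
  have key : ∀ j ≤ k, y j = ζ (ζinv (y 0) + ∑ i ∈ Finset.range j, θ i) := by
    intro j hj
    induction j with
    | zero => simp [hz0ζ]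
    | succ j ih =>
      have hjk : j < k := hj
      have ihj := ih (le_of_lt hjk)
      set s := ζinv (y 0) + ∑ i ∈ Finset.range j, θ i with hs
      have hsum0 : 0 ≤ ∑ i ∈ Finset.range j, θ i :=
        Finset.sum_nonneg fun i hi =>
          le_of_lt (hθ i (lt_of_lt_of_le (Finset.mem_range.mp hi) (le_of_lt hjk)))
      have hs0 : 0 ≤ s := add_nonneg hz0.1 hsum0
      have hstepj := hstep j hjk
      have hθj := hθ j hjk
      rw [Finset.sum_range_succ, ← add_assoc, ← hs]
      rw [hstepj, ihj]
      ring_nf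
      by_cases hsT : s ≤ T
      · rw [hinvζ s ⟨hs0, hsT⟩, add_comm]
      · push_neg at hsT
        have h1s : ζ s = 1 := h1 s (le_of_lt hsT)
        rw [h1s, hinvT, h1 (T + θ j) (by linarith), h1 (θ j + s) (by linarith)]
  have := key k le_rfl
  linarith [this]
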